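/- Let G be a graph with vertex ordering v_1, ..., v_n and induced subgraphs G_i on {v_1, ..., v_i}. For every potential maximal clique K of G_i and every j with i ≤ j ≤ n, there exists a potential maximal clique K' of G_j with K ⊆ K' ⊆ K ∪ {v_{i+1}, ..., v_j}. -/

import Mathlib

open SimpleGraph

variable {V : Type*}

/-- `C` is a connected component of `G \ K`:
nonempty, disjoint from `K`, connected, and maximal such. -/
def IsCompOf (G : SimpleGraph V) (K C : Set V) : Prop :=
  C.Nonempty ∧ Disjoint C K ∧ (G.induce C).Connected ∧
    ∀ D : Set V, C ⊆ D → Disjoint D K → (G.induce D).Connected → D = C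

/-- The neighborhood of a set `C`: vertices outside `C` with a neighbor in `C`. -/
def nbhd (G : SimpleGraph V) (C : Set V) : Set V :=
  {v | v ∉ C ∧ ∃ u ∈ C, G.Adj u v}

/-- `C` is a full component for `K` in `G`. -/
def IsFullComp (G : SimpleGraph V) (K C : Set V) : Prop :=
  IsCompOf G K C ∧ ∀ v ∈ K, ∃ u ∈ C, G.Adj u v

/-- Bouchitté–Todinca characterization of potential maximal cliques:
(a) no full component, (b) non-adjacent pairs of `K` covered by a common component. -/
def IsPMC (G : SimpleGraph V) (K : Set V) : Prop :=
  (∀ C : Set V, IsCompOf G K C → ¬ ∀ v ∈ K, ∃ u ∈ C, G.Adj u v) ∧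
  (∀ x ∈ K, ∀ y ∈ K, x ≠ y → ¬ G.Adj x y →
    ∃ C : Set V, IsCompOf G K C ∧ (∃ u ∈ C, G.Adj u x) ∧ (∃ u ∈ C, G.Adj u y))

/-- `C` is a connected component of `G[W] \ K`, where `G[W]` is the subgraph of
`G` induced by `W`. -/
def IsCompOfIn (G : SimpleGraph V) (W K C : Set V) : Prop :=
  C.Nonempty ∧ C ⊆ W ∧ Disjoint C K ∧ (G.induce C).Connected ∧
    ∀ D : Set V, C ⊆ D → D ⊆ W → Disjoint D K → (G.induce D).Connected → D = C

/-- `K` is a potential maximal clique of the subgraph of `G` induced by `W`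
(Bouchitté–Todinca characterization). -/
def IsPMCIn (G : SimpleGraph V) (W K : Set V) : Prop :=
  K ⊆ W ∧
  (∀ C : Set V, IsCompOfIn G W K C → ¬ ∀ v ∈ K, ∃ u ∈ C, G.Adj u v) ∧
  (∀ x ∈ K, ∀ y ∈ K, x ≠ y → ¬ G.Adj x y →
    ∃ C : Set V, IsCompOfIn G W K C ∧ (∃ u ∈ C, G.Adj u x) ∧ (∃ u ∈ C, G.Adj u y))

variable {G : SimpleGraph V}

lemma walk_transfer {S : Set V} {a b : S} (p : (G.induce S).Walk a b) {T : Set V}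
    (hT : ∀ x ∈ p.support, ↑x ∈ T) :
    (G.induce T).Reachable ⟨a, hT a p.start_mem_support⟩ ⟨b, hT b p.end_mem_support⟩ := by
  induction p with
  | nil => rfl
  | @cons u c w h q ih =>
      have h1 : ↑u ∈ T := hT u (by simp)
      have h2 : ↑c ∈ T := hT c (by simp)
      have hadj : (G.induce T).Adj ⟨↑u, h1⟩ ⟨↑c, h2⟩ := by
        simpa [comap_adj] using h
      exact (hadj.reachable).trans (ih (fun x hx => hT x (by simp [hx])))

lemma walk_exit {S : Set V} {a b : S} (p : (G.induce S).Walk a b) (C : Set V)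
    (ha : ↑a ∈ C) (hb : ↑b ∉ C) :
    ∃ x ∈ C, ∃ y, y ∈ S ∧ y ∉ C ∧ G.Adj x y := by
  induction p with
  | nil => exact absurd ha hb
  | @cons u c w h q ih =>
      by_cases hc : ↑c ∈ C
      · exact ih hc hb
      · exact ⟨u, ha, c, c.2, hc, by simpa [comap_adj] using h⟩

lemma singleton_connected (w : V) : (G.induce {w}).Connected := by
  constructor
  intro x y
  have : x = y := Subtype.ext (by rw [x.2, y.2])
  exact this ▸ Reachable.refl x

/-- existence of a maximal connected set containing `v` inside `S`. -/
lemma comp_spec (G : SimpleGraph V) (S : Set V) (v : V) (hv : v ∈ S) :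
    ∃ C : Set V, v ∈ C ∧ C ⊆ S ∧ (G.induce C).Connected ∧
      ∀ D : Set V, D ⊆ S → (G.induce D).Connected → v ∈ D → D ⊆ C := by
  classical
  set Cs : Set V := {u | ∃ hu : u ∈ S, (G.induce S).Reachable ⟨v, hv⟩ ⟨u, hu⟩} with hCs
  have hvC : v ∈ Cs := ⟨hv, Reachable.refl _⟩
  refine ⟨Cs, hvC, fun u hu => hu.1, ?_, ?_⟩
  · apply induce_connected_of_patches v hvC
    intro u hu
    obtain ⟨huS, hr⟩ := hu
    obtain ⟨p⟩ := hr
    refine ⟨Subtype.val '' {x | x ∈ p.support}, ?_, ⟨⟨v, hv⟩, p.start_mem_support, rfl⟩,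
      ⟨⟨u, huS⟩, p.end_mem_support, rfl⟩, ?_⟩
    · rintro x ⟨y, hy, rfl⟩
      show ∃ hu : ↑y ∈ S, _
      exact ⟨y.2, ⟨(p.takeUntil y hy)⟩⟩
    · exact walk_transfer (T := Subtype.val '' {x | x ∈ p.support}) p (fun x hx => ⟨x, hx, rfl⟩)
  · intro D hDS hDconn hvD x hxD
    obtain ⟨q⟩ := hDconn.preconnected ⟨v, hvD⟩ ⟨x, hxD⟩
    exact ⟨hDS hxD, walk_transfer q (fun y hy => hDS y.2)⟩

lemma compIn_exists (G : SimpleGraph V) (W K : Set V) (v : V) (hvW : v ∈ W) (hvK : v ∉ K) :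
    ∃ C, IsCompOfIn G W K C ∧ v ∈ C := by
  obtain ⟨C, hvC, hCS, hconn, hmax⟩ := comp_spec G (W \ K) v ⟨hvW, hvK⟩
  have hCW : C ⊆ W := hCS.trans Set.diff_subset
  have hCK : Disjoint C K := Set.disjoint_of_subset_left hCS Set.disjoint_sdiff_left
  refine ⟨C, ⟨⟨v, hvC⟩, hCW, hCK, hconn, ?_⟩, hvC⟩
  intro D hCD hDW hDK hDconn
  exact Set.Subset.antisymm (hmax D (Set.subset_diff.mpr ⟨hDW, hDK⟩) hDconn (hCD hvC)) hCD

lemma comp_absorb {W K C : Set V} (h : IsCompOfIn G W K C) (D : Set V)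
    (hDW : D ⊆ W) (hDK : Disjoint D K) (hconn : (G.induce D).Connected)
    (hne : (C ∩ D).Nonempty) : D ⊆ C := by
  have hu : C ∪ D = C := h.2.2.2.2 (C ∪ D) Set.subset_union_left
    (Set.union_subset h.2.1 hDW) (Set.disjoint_union_left.mpr ⟨h.2.2.1, hDK⟩)
    (induce_union_connected h.2.2.2.1.preconnected hconn.preconnected hne)
  exact hu ▸ Set.subset_union_right

lemma comp_unique {W K C C' : Set V} (h : IsCompOfIn G W K C) (h' : IsCompOfIn G W K C')
    (hne : (C ∩ C').Nonempty) : C = C' :=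
  Set.Subset.antisymm
    (comp_absorb h' C h.2.1 h.2.2.1 h.2.2.2.1 (by rwa [Set.inter_comm] at hne))
    (comp_absorb h C' h'.2.1 h'.2.2.1 h'.2.2.2.1 hne)

lemma disj_ins {s t : Set V} {a : V} : Disjoint s (insert a t) ↔ a ∉ s ∧ Disjoint s t := by
  constructor
  · exact fun h => ⟨Set.disjoint_right.mp h (Set.mem_insert a t),
      h.mono_right (Set.subset_insert a t)⟩
  · rintro ⟨has, hst⟩
    rw [Set.disjoint_right]
    rintro x hx
    rcases Set.mem_insert_iff.mp hx with rfl | hx'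
    · exact has
    · exact Set.disjoint_right.mp hst hx'

/-- a component of `G[W∪{a}] - K` not containing `a` is a component of `G[W] - K`. -/
lemma comp_down {W K C : Set V} {a : V} (hC : IsCompOfIn G (insert a W) K C)
    (haC : a ∉ C) : IsCompOfIn G W K C := by
  obtain ⟨hne, hsub, hdisj, hconn, hmax⟩ := hC
  have hCW : C ⊆ W := fun x hx => ((Set.mem_insert_iff.mp (hsub hx)).resolve_left
    (fun h => haC (h ▸ hx)))
  exact ⟨hne, hCW, hdisj, hconn, fun D h1 h2 h3 h4 =>
    hmax D h1 (h2.trans (Set.subset_insert a W)) h3 h4⟩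

/-- components of `G[W∪{a}] - (K∪{a})` are exactly components of `G[W] - K`. -/
lemma comp_equiv {W K C : Set V} {a : V} (haW : a ∉ W) :
    IsCompOfIn G (insert a W) (insert a K) C ↔ IsCompOfIn G W K C := by
  constructor
  · rintro ⟨hne, hsub, hdisj, hconn, hmax⟩
    rw [disj_ins] at hdisj
    have hCW : C ⊆ W := fun x hx => ((Set.mem_insert_iff.mp (hsub hx)).resolve_left
      (fun h => hdisj.1 (h ▸ hx)))
    refine ⟨hne, hCW, hdisj.2, hconn, fun D h1 h2 h3 h4 => ?_⟩
    exact hmax D h1 (h2.trans (Set.subset_insert a W))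
      (disj_ins.mpr ⟨fun haD => haW (h2 haD), h3⟩) h4
  · rintro ⟨hne, hsub, hdisj, hconn, hmax⟩
    refine ⟨hne, hsub.trans (Set.subset_insert a W),
      disj_ins.mpr ⟨fun haC => haW (hsub haC), hdisj⟩, hconn,
      fun D h1 h2 h3 h4 => ?_⟩
    rw [disj_ins] at h3
    have hDW : D ⊆ W := fun x hx => ((Set.mem_insert_iff.mp (h2 hx)).resolve_left
      (fun h => h3.1 (h ▸ hx)))
    exact hmax D h1 hDW h3.2 h4

lemma step (G : SimpleGraph V) {W K : Set V} (a : V) (haW : a ∉ W)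
    (hK : IsPMCIn G W K) :
    ∃ K', IsPMCIn G (insert a W) K' ∧ K ⊆ K' ∧ K' ⊆ insert a K := by
  obtain ⟨hKW, hKa, hKb⟩ := hK
  have haK : a ∉ K := fun h => haW (hKW h)
  obtain ⟨Ca, hCa, haCa⟩ := compIn_exists G (insert a W) K a (Set.mem_insert a W) haK
  -- lifting components of W to components of insert a W
  have lift : ∀ C : Set V, IsCompOfIn G W K C →
      ∃ C', IsCompOfIn G (insert a W) K C' ∧ C ⊆ C' := by
    intro C hC
    obtain ⟨v, hvC⟩ := hC.1
    obtain ⟨C', hC', hvC'⟩ := compIn_exists G (insert a W) K v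
      (Set.subset_insert a W (hC.2.1 hvC)) (fun h => hC.2.2.1.ne_of_mem hvC h rfl)
    exact ⟨C', hC', comp_absorb hC' C (hC.2.1.trans (Set.subset_insert a W)) hC.2.2.1
      hC.2.2.2.1 ⟨v, hvC', hvC⟩⟩
  by_cases hfull : ∀ v ∈ K, ∃ u ∈ Ca, G.Adj u v
  · -- K ∪ {a} is a PMC of insert a W
    refine ⟨insert a K, ⟨Set.insert_subset_insert hKW, ?_, ?_⟩,
      Set.subset_insert a K, subset_rfl⟩
    · intro C hC hCfull
      exact hKa C ((comp_equiv haW).mp hC) (fun v hv => hCfull v (Set.mem_insert_of_mem a hv))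
    · have key : ∀ y ∈ K, ¬ G.Adj a y →
          ∃ C, IsCompOfIn G (insert a W) (insert a K) C ∧
            (∃ u ∈ C, G.Adj u a) ∧ (∃ u ∈ C, G.Adj u y) := by
        intro y hy hay
        obtain ⟨u, huCa, huy⟩ := hfull y hy
        have hua : u ≠ a := fun h => hay (h ▸ huy)
        have huW : u ∈ W := (Set.mem_insert_iff.mp (hCa.2.1 huCa)).resolve_left hua
        have huK : u ∉ K := fun h => hCa.2.2.1.ne_of_mem huCa h rfl
        obtain ⟨C, hC, huC⟩ := compIn_exists G W K u huW huK
        have hCCa : C ⊆ Ca := comp_absorb hCa C (hC.2.1.trans (Set.subset_insert a W))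
          hC.2.2.1 hC.2.2.2.1 ⟨u, huCa, huC⟩
        have haC : a ∉ C := fun h => haW (hC.2.1 h)
        -- find a neighbor of a in C
        obtain ⟨q⟩ := hCa.2.2.2.1.preconnected ⟨u, huCa⟩ ⟨a, haCa⟩
        obtain ⟨x, hxC, y', hy'Ca, hy'C, hxy'⟩ := walk_exit q C huC haC
        have hy'a : y' = a := by
          by_contra hne
          have hy'W : y' ∈ W := (Set.mem_insert_iff.mp (hCa.2.1 hy'Ca)).resolve_left hne
          have hy'K : y' ∉ K := fun h => hCa.2.2.1.ne_of_mem hy'Ca h rfl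
          have hconn : (G.induce (C ∪ {y'})).Connected :=
            connected_induce_union hC.2.2.2.1.preconnected (singleton_connected y').preconnected hxC rfl hxy'
          have := hC.2.2.2.2 (C ∪ {y'}) Set.subset_union_left
            (Set.union_subset hC.2.1 (Set.singleton_subset_iff.mpr hy'W))
            (Set.disjoint_union_left.mpr ⟨hC.2.2.1,
              Set.disjoint_singleton_left.mpr hy'K⟩) hconn
          exact hy'C (this ▸ (Set.mem_union_right C rfl))
        exact ⟨C, (comp_equiv haW).mpr hC, ⟨x, hxC, hy'a ▸ hxy'⟩, ⟨u, huC, huy⟩⟩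
      intro x hx y hy hxy hadj
      rcases Set.mem_insert_iff.mp hx with rfl | hx'
      · rcases Set.mem_insert_iff.mp hy with rfl | hy'
        · exact absurd rfl hxy
        · exact key y hy' hadj
      · rcases Set.mem_insert_iff.mp hy with rfl | hy'
        · obtain ⟨C, hC, h1, h2⟩ := key x hx' (fun h => hadj h.symm)
          exact ⟨C, hC, h2, h1⟩
        · obtain ⟨C, hC, h1, h2⟩ := hKb x hx' y hy' hxy hadj
          exact ⟨C, (comp_equiv haW).mpr hC, h1, h2⟩
  · -- K is a PMC of insert a W
    refine ⟨K, ⟨hKW.trans (Set.subset_insert a W), ?_, ?_⟩, subset_rfl, Set.subset_insert a K⟩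
    · intro C hC hCfull
      by_cases haC : a ∈ C
      · exact hfull ((comp_unique hC hCa ⟨a, haC, haCa⟩) ▸ hCfull)
      · exact hKa C (comp_down hC haC) hCfull
    · intro x hx y hy hxy hadj
      obtain ⟨C, hC, ⟨u1, hu1, h1⟩, ⟨u2, hu2, h2⟩⟩ := hKb x hx y hy hxy hadj
      obtain ⟨C', hC', hCC'⟩ := lift C hC
      exact ⟨C', hC', ⟨u1, hCC' hu1, h1⟩, ⟨u2, hCC' hu2, h2⟩⟩

theorem stmt7 {n : ℕ} (G : SimpleGraph (Fin n)) (i : ℕ) (K : Set (Fin n))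
    (hK : IsPMCIn G {v : Fin n | v.val < i} K) :
    ∀ j : ℕ, i ≤ j → j ≤ n →
      ∃ K' : Set (Fin n), IsPMCIn G {v : Fin n | v.val < j} K' ∧
        K ⊆ K' ∧ K' ⊆ K ∪ {v : Fin n | i ≤ v.val ∧ v.val < j} := by
  intro j hij hjn
  induction j, hij using Nat.le_induction with
  | base => exact ⟨K, hK, subset_rfl, Set.subset_union_left⟩
  | succ j hij ih =>
      obtain ⟨K', hK', hKK', hK'sub⟩ := ih (le_trans (Nat.le_succ j) hjn)
      have hjn' : j < n := hjn
      set a : Fin n := ⟨j, hjn'⟩ with ha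
      have haW : a ∉ {v : Fin n | v.val < j} := by simp [ha]
      have hins : {v : Fin n | v.val < j + 1} = insert a {v : Fin n | v.val < j} := by
        ext v
        simp [ha, Nat.lt_succ_iff_lt_or_eq, Fin.ext_iff, or_comm]
        omega
      obtain ⟨K'', hK'', hsub1, hsub2⟩ := step G a haW hK'
      rw [← hins] at hK''
      refine ⟨K'', hK'', hKK'.trans hsub1, ?_⟩
      intro x hx
      rcases Set.mem_insert_iff.mp (hsub2 hx) with rfl | hx'
      · exact Or.inr ⟨hij, Nat.lt_succ_self j⟩
      · rcases hK'sub hx' with h | h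
        · exact Or.inl h
        · exact Or.inr ⟨h.1, Nat.lt_succ_of_lt h.2⟩
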